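/- arXiv:math/0409431 — 2 statements merged into one kernel-verified Lean document; each statement's English description precedes it below -/
import Mathlib

section
/- Let D ⊆ ℂ^n be a domain and let a, z ∈ D. Then for every N ∈ ℕ one has l_D^N(a,z) ≥ l_D^{N+1}(a,z); that is, the sequence (l_D^N(a,z))_{N∈ℕ} is decreasing. -/
open Metric Set Filter

noncomputable section

/-- `HoloDisc D φ` : `φ` is a holomorphic map from the unit disc `𝔻 ⊆ ℂ` into `D`. -/
def HoloDisc {E : Type*} [NormedAddCommGroup E] [NormedSpace ℂ E]
    (D : Set E) (φ : ℂ → E) : Prop :=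
  DifferentiableOn ℂ φ (Metric.ball 0 1) ∧ Set.MapsTo φ (Metric.ball 0 1) D

/-- The Lempert function `l_D(A,z)` with pole set `A`. -/
def lempert {E : Type*} [NormedAddCommGroup E] [NormedSpace ℂ E]
    (D : Set E) (A : Set E) (z : E) : ℝ :=
  sInf { p : ℝ | ∃ lam : A → ℂ, (∀ a, lam a ∈ Metric.ball (0:ℂ) 1) ∧
    (∃ φ : ℂ → E, HoloDisc D φ ∧ φ 0 = z ∧ ∀ a : A, φ (lam a) = (a : E)) ∧
    p = ∏' a : A, ‖lam a‖ }

/-- The function `l_D^N(a,z)`, `N ∈ ℕ ∪ {∞}` : the infimum of products `∏_{j=1}^N |λ_j|`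
over `N` pairwise distinct points of the disc which are sent to `a` by a holomorphic map
`φ : 𝔻 → D` with `φ(0) = z`. -/
def lemN {E : Type*} [NormedAddCommGroup E] [NormedSpace ℂ E]
    (D : Set E) (N : ℕ∞) (a z : E) : ℝ :=
  sInf { p : ℝ | ∃ lam : {j : ℕ // (j : ℕ∞) < N} → ℂ, Function.Injective lam ∧
    (∀ j, lam j ∈ Metric.ball (0:ℂ) 1) ∧
    (∃ φ : ℂ → E, HoloDisc D φ ∧ φ 0 = z ∧ ∀ j, φ (lam j) = a) ∧
    p = ∏' j, ‖lam j‖ }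

/-! ### Auxiliary constructions for the proof -/

namespace LemNAux

/-- the square root of `(1-l)^2`. -/
def cc (l : ℂ) : ℂ := ((1 - l)^2) ^ (1/2 : ℂ)

/-- the sign relating `cc l` and `1 - l`. -/
def ss (l : ℂ) : ℂ := cc l / (1 - l)

/-- the square root of the discriminant of `X^2 - r(1+l)X + l`. -/
def ww (r : ℝ) (l : ℂ) : ℂ := ((r:ℂ)^2*(1+l)^2 - 4*l) ^ (1/2 : ℂ)

/-- a root of `X^2 - r(1+l)X + l` tending to `l` as `r → 1⁻`. -/
def rootA (r : ℝ) (l : ℂ) : ℂ := ((r:ℂ)*(1+l) - ss l * ww r l)/2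

/-- a root of `X^2 - r(1+l)X + l` tending to `1` as `r → 1⁻`. -/
def rootB (r : ℝ) (l : ℂ) : ℂ := ((r:ℂ)*(1+l) + ss l * ww r l)/2

/-- the degree two Blaschke product with zeros `0` and `r`. -/
def hmap (r : ℝ) (μ : ℂ) : ℂ := μ*((r:ℂ) - μ)/(1 - (r:ℂ)*μ)

lemma sq_cpow_half (x : ℂ) : (x ^ (1/2 : ℂ)) ^ 2 = x := by
  rcases eq_or_ne x 0 with rfl | hx
  · rw [Complex.zero_cpow (by norm_num : (1/2:ℂ) ≠ 0)]; ring
  · rw [sq, ← Complex.cpow_add _ _ hx]; norm_num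

lemma cc_sq (l : ℂ) : (cc l)^2 = (1-l)^2 := sq_cpow_half _
lemma ww_sq (r : ℝ) (l : ℂ) : (ww r l)^2 = (r:ℂ)^2*(1+l)^2 - 4*l := sq_cpow_half _

lemma one_sub_ne {l : ℂ} (hl : ‖l‖ < 1) : 1 - l ≠ 0 := by
  intro h
  have : l = 1 := by linear_combination -h
  simp [this] at hl

lemma cc_ne {l : ℂ} (hl : ‖l‖ < 1) : cc l ≠ 0 := by
  intro h
  have := cc_sq l
  rw [h] at this
  exact pow_ne_zero 2 (one_sub_ne hl) (by linear_combination -this)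

lemma ss_sq {l : ℂ} (hl : ‖l‖ < 1) : (ss l)^2 = 1 := by
  have h1 := one_sub_ne hl
  rw [ss, div_pow, cc_sq, div_self (pow_ne_zero 2 h1)]

lemma ss_ne {l : ℂ} (hl : ‖l‖ < 1) : ss l ≠ 0 := by
  intro h
  have := ss_sq hl
  rw [h] at this; simp at this

lemma sw_sq {l : ℂ} (hl : ‖l‖ < 1) (r : ℝ) :
    (ss l * ww r l)^2 = (r:ℂ)^2*(1+l)^2 - 4*l := by
  rw [mul_pow, ss_sq hl, one_mul, ww_sq]

lemma ss_mul_cc {l : ℂ} (hl : ‖l‖ < 1) : ss l * cc l = 1 - l := by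
  rw [ss, div_mul_eq_mul_div, ← sq, cc_sq, sq, mul_div_assoc, div_self (one_sub_ne hl), mul_one]

lemma rootA_root {l : ℂ} (hl : ‖l‖ < 1) (r : ℝ) :
    (rootA r l)^2 - (r:ℂ)*(1+l)*(rootA r l) + l = 0 := by
  have h := sw_sq hl r
  rw [rootA]
  linear_combination (1/4 : ℂ) * h

lemma rootB_root {l : ℂ} (hl : ‖l‖ < 1) (r : ℝ) :
    (rootB r l)^2 - (r:ℂ)*(1+l)*(rootB r l) + l = 0 := by
  have h := sw_sq hl r
  rw [rootB]
  linear_combination (1/4 : ℂ) * h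

lemma root_in_ball {r : ℝ} (hr0 : 0 < r) (hr1 : r < 1) {l μ : ℂ} (hl : ‖l‖ < 1)
    (h : μ^2 - (r:ℂ)*(1+l)*μ + l = 0) : ‖μ‖ < 1 := by
  by_contra hge
  push_neg at hge
  have hrne : (r:ℂ) ≠ 0 := by exact_mod_cast hr0.ne'
  have hne : 1 - (r:ℂ)*μ ≠ 0 := by
    intro h0
    have hμ : μ = (r:ℂ)⁻¹ := by
      field_simp
      linear_combination -h0
    rw [hμ] at h
    have h2 : (r:ℂ)^2 = 1 := by
      field_simp at h
      linear_combination -h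
    have h3 : (r:ℝ)^2 = 1 := by exact_mod_cast h2
    nlinarith
  have key : μ*((r:ℂ) - μ) = l*(1 - (r:ℂ)*μ) := by linear_combination -h
  have hnsq : Complex.normSq (1 - (r:ℂ)*μ) ≤ Complex.normSq ((r:ℂ) - μ) := by
    have e : Complex.normSq (1 - (r:ℂ)*μ) - Complex.normSq ((r:ℂ) - μ)
        = (1 - r^2) * (1 - Complex.normSq μ) := by
      simp [Complex.normSq_apply]; ring
    have hμsq : 1 ≤ Complex.normSq μ := by
      rw [← Complex.sq_norm]; nlinarith
    have h4 : (1 - r^2) * (1 - Complex.normSq μ) ≤ 0 :=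
      mul_nonpos_of_nonneg_of_nonpos (by nlinarith) (by linarith)
    linarith
  have h1 : ‖1 - (r:ℂ)*μ‖ ≤ ‖(r:ℂ) - μ‖ := by
    rw [Complex.norm_def, Complex.norm_def]
    exact Real.sqrt_le_sqrt hnsq
  have h2 : ‖μ*((r:ℂ) - μ)‖ = ‖l*(1 - (r:ℂ)*μ)‖ := by rw [key]
  rw [norm_mul, norm_mul] at h2
  have hpos : 0 < ‖1 - (r:ℂ)*μ‖ := by
    simpa [norm_pos_iff] using hne
  nlinarith [norm_nonneg ((r:ℂ) - μ)]

lemma one_sub_rmul_ne {r : ℝ} (hr0 : 0 ≤ r) (hr1 : r < 1) {μ : ℂ} (hμ : ‖μ‖ < 1) :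
    1 - (r:ℂ)*μ ≠ 0 := by
  intro h
  have h2 : ‖(r:ℂ)*μ‖ < 1 := by
    rw [norm_mul, Complex.norm_real, Real.norm_eq_abs, _root_.abs_of_nonneg hr0]
    nlinarith [norm_nonneg μ]
  have h1 : (r:ℂ)*μ = 1 := by linear_combination -h
  rw [h1] at h2; simp at h2

lemma hmap_eq {r : ℝ} (hr0 : 0 < r) (hr1 : r < 1) {l μ : ℂ} (hμ : ‖μ‖ < 1)
    (h : μ^2 - (r:ℂ)*(1+l)*μ + l = 0) : hmap r μ = l := by
  have hne := one_sub_rmul_ne hr0.le hr1 hμ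
  rw [hmap, div_eq_iff hne]
  linear_combination -h

lemma hmap_maps {r : ℝ} (hr0 : 0 < r) (hr1 : r < 1) {μ : ℂ} (hμ : ‖μ‖ < 1) :
    ‖hmap r μ‖ < 1 := by
  have hne := one_sub_rmul_ne hr0.le hr1 hμ
  have hpos : 0 < ‖1 - (r:ℂ)*μ‖ := by
    simpa [norm_pos_iff] using hne
  rw [hmap, norm_div, norm_mul, div_lt_one hpos]
  have e : Complex.normSq (1 - (r:ℂ)*μ) - Complex.normSq ((r:ℂ) - μ)
      = (1 - r^2) * (1 - Complex.normSq μ) := by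
    simp [Complex.normSq_apply]; ring
  have hμsq : Complex.normSq μ ≤ 1 := by
    rw [← Complex.sq_norm]; nlinarith [norm_nonneg μ]
  have h4 : 0 ≤ (1 - r^2) * (1 - Complex.normSq μ) :=
    mul_nonneg (by nlinarith) (by linarith)
  have h1 : ‖(r:ℂ) - μ‖ ≤ ‖1 - (r:ℂ)*μ‖ := by
    rw [Complex.norm_def, Complex.norm_def]
    exact Real.sqrt_le_sqrt (by linarith)
  have e1 : ‖μ‖ * ‖(r:ℂ) - μ‖ ≤ ‖μ‖ * ‖1 - (r:ℂ)*μ‖ :=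
    mul_le_mul_of_nonneg_left h1 (norm_nonneg μ)
  have e2 : ‖μ‖ * ‖1 - (r:ℂ)*μ‖ < 1 * ‖1 - (r:ℂ)*μ‖ :=
    mul_lt_mul_of_pos_right hμ hpos
  linarith

lemma hmap_zero (r : ℝ) : hmap r 0 = 0 := by simp [hmap]

lemma hmap_diff {r : ℝ} (hr0 : 0 < r) (hr1 : r < 1) :
    DifferentiableOn ℂ (hmap r) (Metric.ball 0 1) := by
  apply DifferentiableOn.div
  · exact (differentiable_id.mul ((differentiable_const _).sub differentiable_id)).differentiableOn
  · exact ((differentiable_const _).sub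
      ((differentiable_const _).mul differentiable_id)).differentiableOn
  · intro μ hμ
    exact one_sub_rmul_ne hr0.le hr1 (by simpa [Complex.dist_eq] using Metric.mem_ball.mp hμ)

lemma slit {l : ℂ} (hl : ‖l‖ < 1) : ((1 - l)^2) ∈ Complex.slitPlane := by
  rw [Complex.mem_slitPlane_iff]
  by_cases him : (1-l).im = 0
  · left
    have hre : 0 < (1-l).re := by
      have h2 : |l.re| ≤ ‖l‖ := Complex.abs_re_le_norm l
      simp only [Complex.sub_re, Complex.one_re]
      have := abs_le.mp h2
      linarith
    simp only [pow_two, Complex.mul_re, him, mul_zero, sub_zero]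
    positivity
  · by_cases hre : (1-l).re = 0
    · exfalso
      have h1 : l.re = 1 := by
        have : (1:ℂ).re - l.re = 0 := by rw [← Complex.sub_re, hre]
        simp at this; linarith
      have h2 : |l.re| ≤ ‖l‖ := Complex.abs_re_le_norm l
      rw [h1] at h2; simp at h2; linarith
    · right
      simp only [pow_two, Complex.mul_im]
      intro h
      rcases mul_eq_zero.mp (by linarith : (1-l).re * (1-l).im = 0) with h' | h'
      · exact hre h'
      · exact him h'

lemma ww_tendsto {l : ℂ} (hl : ‖l‖ < 1) :
    Tendsto (fun r : ℝ => ww r l) (nhdsWithin 1 (Set.Iio 1)) (nhds (cc l)) := by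
  have hcont : ContinuousAt (fun x : ℂ => x ^ (1/2:ℂ)) ((1-l)^2) :=
    continuousAt_cpow_const (slit hl)
  have hg : Tendsto (fun r : ℝ => (r:ℂ)^2*(1+l)^2 - 4*l) (nhdsWithin 1 (Set.Iio 1))
      (nhds ((1-l)^2)) := by
    have hc : Continuous fun r : ℝ => (r:ℂ)^2*(1+l)^2 - 4*l := by continuity
    have h1 := (hc.tendsto 1).mono_left (nhdsWithin_le_nhds (s := Set.Iio 1))
    have : ((1:ℝ):ℂ)^2*(1+l)^2 - 4*l = (1-l)^2 := by push_cast; ring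
    rwa [this] at h1
  exact hcont.tendsto.comp hg

lemma rootA_tendsto {l : ℂ} (hl : ‖l‖ < 1) :
    Tendsto (fun r : ℝ => rootA r l) (nhdsWithin 1 (Set.Iio 1)) (nhds l) := by
  have hr : Tendsto (fun r : ℝ => (r:ℂ)) (nhdsWithin (1:ℝ) (Set.Iio 1)) (nhds (1:ℂ)) :=
    (Complex.continuous_ofReal.tendsto 1).mono_left nhdsWithin_le_nhds
  have h : Tendsto (fun r : ℝ => ((r:ℂ)*(1+l) - ss l * ww r l)/2) (nhdsWithin 1 (Set.Iio 1))
      (nhds (((1:ℂ)*(1+l) - ss l * cc l)/2)) :=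
    ((hr.mul (tendsto_const_nhds (x := (1+l)))).sub
      ((tendsto_const_nhds (x := ss l)).mul (ww_tendsto hl))).div_const 2
  have heq : ((1:ℂ)*(1+l) - ss l * cc l)/2 = l := by rw [ss_mul_cc hl]; ring
  rw [heq] at h
  exact h

lemma rootB_tendsto {l : ℂ} (hl : ‖l‖ < 1) :
    Tendsto (fun r : ℝ => rootB r l) (nhdsWithin 1 (Set.Iio 1)) (nhds 1) := by
  have hr : Tendsto (fun r : ℝ => (r:ℂ)) (nhdsWithin (1:ℝ) (Set.Iio 1)) (nhds (1:ℂ)) :=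
    (Complex.continuous_ofReal.tendsto 1).mono_left nhdsWithin_le_nhds
  have h : Tendsto (fun r : ℝ => ((r:ℂ)*(1+l) + ss l * ww r l)/2) (nhdsWithin 1 (Set.Iio 1))
      (nhds (((1:ℂ)*(1+l) + ss l * cc l)/2)) :=
    ((hr.mul (tendsto_const_nhds (x := (1+l)))).add
      ((tendsto_const_nhds (x := ss l)).mul (ww_tendsto hl))).div_const 2
  have heq : ((1:ℂ)*(1+l) + ss l * cc l)/2 = 1 := by rw [ss_mul_cc hl]; ring
  rw [heq] at h
  exact h

/-- The defining set of `lemN`. -/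
def lemSet {E : Type*} [NormedAddCommGroup E] [NormedSpace ℂ E]
    (D : Set E) (N : ℕ∞) (a z : E) : Set ℝ :=
  { p : ℝ | ∃ lam : {j : ℕ // (j : ℕ∞) < N} → ℂ, Function.Injective lam ∧
    (∀ j, lam j ∈ Metric.ball (0:ℂ) 1) ∧
    (∃ φ : ℂ → E, HoloDisc D φ ∧ φ 0 = z ∧ ∀ j, φ (lam j) = a) ∧
    p = ∏' j, ‖lam j‖ }

lemma lemN_eq_sInf {E : Type*} [NormedAddCommGroup E] [NormedSpace ℂ E]
    (D : Set E) (N : ℕ∞) (a z : E) : lemN D N a z = sInf (lemSet D N a z) := rfl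

/-- The canonical equivalence between the index type and `Fin N`. -/
def eN (N : ℕ) : {j : ℕ // (j : ℕ∞) < (N : ℕ)} ≃ Fin N where
  toFun j := ⟨j.1, by exact_mod_cast j.2⟩
  invFun j := ⟨j.1, by exact_mod_cast j.2⟩
  left_inv j := rfl
  right_inv j := rfl

instance (N : ℕ) : Fintype {j : ℕ // (j : ℕ∞) < (N : ℕ)} := Fintype.ofEquiv _ (eN N).symm

lemma mem_ball_iff_abs {x : ℂ} : x ∈ Metric.ball (0:ℂ) 1 ↔ ‖x‖ < 1 := by
  simp [Metric.mem_ball, Complex.dist_eq]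

lemma lemSet_prod {E : Type*} [NormedAddCommGroup E] [NormedSpace ℂ E]
    {D : Set E} {N : ℕ} {a z : E}
    (lam : {j : ℕ // (j : ℕ∞) < (N : ℕ)} → ℂ) :
    ∏' j, ‖lam j‖ = ∏ i : Fin N, ‖lam ((eN N).symm i)‖ := by
  rw [← Equiv.tprod_eq (eN N).symm (fun j => ‖lam j‖), tprod_fintype]

lemma lemSet_nonneg {E : Type*} [NormedAddCommGroup E] [NormedSpace ℂ E]
    {D : Set E} {N : ℕ} {a z : E} {p : ℝ} (hp : p ∈ lemSet D (N : ℕ) a z) : 0 ≤ p := by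
  obtain ⟨lam, -, -, -, rfl⟩ := hp
  rw [lemSet_prod (D := D) (a := a) (z := z) lam]
  exact Finset.prod_nonneg fun i _ => norm_nonneg _

lemma lemSet_le_one {E : Type*} [NormedAddCommGroup E] [NormedSpace ℂ E]
    {D : Set E} {N : ℕ} {a z : E} {p : ℝ} (hp : p ∈ lemSet D (N : ℕ) a z) : p ≤ 1 := by
  obtain ⟨lam, -, hmem, -, rfl⟩ := hp
  rw [lemSet_prod (D := D) (a := a) (z := z) lam]
  exact Finset.prod_le_one (fun i _ => norm_nonneg _)
    (fun i _ => (mem_ball_iff_abs.mp (hmem _)).le)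

lemma lemSet_bddBelow {E : Type*} [NormedAddCommGroup E] [NormedSpace ℂ E]
    (D : Set E) (N : ℕ) (a z : E) : BddBelow (lemSet D (N : ℕ) a z) :=
  ⟨0, fun _ hx => lemSet_nonneg hx⟩

/-- restriction: a witness for `N+1` points yields a witness for `N` points. -/
lemma lemSet_restrict {E : Type*} [NormedAddCommGroup E] [NormedSpace ℂ E]
    {D : Set E} {N : ℕ} {a z : E} (h : (lemSet D ((N+1 : ℕ)) a z).Nonempty) :
    (lemSet D (N : ℕ) a z).Nonempty := by
  obtain ⟨q, lam, hinj, hmem, ⟨φ, hφ, hφ0, hφa⟩, -⟩ := h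
  set incl : {j : ℕ // (j : ℕ∞) < (N : ℕ)} → {j : ℕ // (j : ℕ∞) < ((N+1 : ℕ))} :=
    fun j => ⟨j.1, lt_trans j.2 (by exact_mod_cast Nat.lt_succ_self N)⟩ with hincl
  have hinclinj : Function.Injective incl := by
    intro x y hxy
    apply Subtype.ext
    simpa [hincl] using congrArg Subtype.val hxy
  exact ⟨∏' j, ‖(lam ∘ incl) j‖, lam ∘ incl, hinj.comp hinclinj,
    fun j => hmem _, ⟨φ, hφ, hφ0, fun j => hφa _⟩, rfl⟩

/-- The key approximation step. -/
lemma key_step {E : Type*} [NormedAddCommGroup E] [NormedSpace ℂ E] (D : Set E)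
    (N : ℕ) (hN : 0 < N) (a z : E) {p : ℝ} (hp : p ∈ lemSet D (N : ℕ) a z)
    {ε : ℝ} (hε : 0 < ε) :
    ∃ q ∈ lemSet D ((N+1 : ℕ)) a z, q ≤ p + ε := by
  obtain ⟨lam, hinj, hmem, ⟨φ, hφ, hφ0, hφa⟩, hpeq⟩ := hp
  set L : Fin N → ℂ := fun i => lam ((eN N).symm i) with hL
  have hLinj : Function.Injective L := hinj.comp (eN N).symm.injective
  have hLmem : ∀ i, ‖L i‖ < 1 := fun i => mem_ball_iff_abs.mp (hmem _)
  have hLa : ∀ i, φ (L i) = a := fun i => hφa _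
  set i0 : Fin N := ⟨0, hN⟩ with hi0
  have hpeq2 : p = ∏ i : Fin N, ‖L i‖ := by
    rw [hpeq, lemSet_prod (D := D) (a := a) (z := z) lam]
  -- eventually facts
  have E1 : ∀ᶠ r : ℝ in nhdsWithin 1 (Set.Iio 1), 0 < r :=
    (eventually_gt_nhds (by norm_num : (0:ℝ) < 1)).filter_mono nhdsWithin_le_nhds
  have E2 : ∀ᶠ r : ℝ in nhdsWithin 1 (Set.Iio 1), r < 1 := by
    filter_upwards [self_mem_nhdsWithin] with r hr using hr
  have E3 : ∀ᶠ r : ℝ in nhdsWithin 1 (Set.Iio 1), ww r (L i0) ≠ 0 :=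
    (ww_tendsto (hLmem i0)).eventually_ne (cc_ne (hLmem i0))
  have Eprod : Tendsto
      (fun r : ℝ => (∏ i : Fin N, ‖rootA r (L i)‖) * ‖rootB r (L i0)‖)
      (nhdsWithin 1 (Set.Iio 1))
      (nhds ((∏ i : Fin N, ‖L i‖) * ‖(1 : ℂ)‖)) := by
    refine Tendsto.mul ?_ ?_
    · exact tendsto_finset_prod _ fun i _ =>
        (continuous_norm.tendsto _).comp (rootA_tendsto (hLmem i))
    · exact (continuous_norm.tendsto _).comp (rootB_tendsto (hLmem i0))
  have E4 : ∀ᶠ r : ℝ in nhdsWithin 1 (Set.Iio 1),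
      (∏ i : Fin N, ‖rootA r (L i)‖) * ‖rootB r (L i0)‖ < p + ε := by
    refine Eprod.eventually_lt_const ?_
    rw [hpeq2]
    simp only [norm_one, mul_one]
    linarith
  obtain ⟨r, hr0, hr1, hw0, hprod⟩ := (E1.and (E2.and (E3.and E4))).exists
  -- the roots
  have hrootA : ∀ i : Fin N, ‖rootA r (L i)‖ < 1 :=
    fun i => root_in_ball hr0 hr1 (hLmem i) (rootA_root (hLmem i) r)
  have hrootB : ‖rootB r (L i0)‖ < 1 :=
    root_in_ball hr0 hr1 (hLmem i0) (rootB_root (hLmem i0) r)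
  have hhA : ∀ i, hmap r (rootA r (L i)) = L i :=
    fun i => hmap_eq hr0 hr1 (hrootA i) (rootA_root (hLmem i) r)
  have hhB : hmap r (rootB r (L i0)) = L i0 :=
    hmap_eq hr0 hr1 hrootB (rootB_root (hLmem i0) r)
  -- the new points
  set g : Fin (N+1) → ℂ := Fin.snoc (fun i => rootA r (L i)) (rootB r (L i0)) with hg
  set tgt : Fin (N+1) → Fin N := Fin.snoc (fun i => i) i0 with htgt
  have hgh : ∀ j : Fin (N+1), hmap r (g j) = L (tgt j) := by
    intro j
    rcases Fin.eq_castSucc_or_eq_last j with ⟨i, rfl⟩ | rfl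
    · simp only [hg, htgt, Fin.snoc_castSucc]; exact hhA i
    · simp only [hg, htgt, Fin.snoc_last]; exact hhB
  have hgmem : ∀ j : Fin (N+1), ‖g j‖ < 1 := by
    intro j
    rcases Fin.eq_castSucc_or_eq_last j with ⟨i, rfl⟩ | rfl
    · simp only [hg, Fin.snoc_castSucc]; exact hrootA i
    · simp only [hg, Fin.snoc_last]; exact hrootB
  have hABne : rootA r (L i0) ≠ rootB r (L i0) := by
    intro h
    apply hw0
    have h2 : ss (L i0) * ww r (L i0) = 0 := by
      rw [rootA, rootB] at h
      have := sub_eq_zero.mpr h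
      field_simp at this ⊢
      linear_combination (-1/2 : ℂ) * this
    rcases mul_eq_zero.mp h2 with h' | h'
    · exact absurd h' (ss_ne (hLmem i0))
    · exact h'
  have hginj : Function.Injective g := by
    intro j k hjk
    have htgteq : tgt j = tgt k := hLinj (by rw [← hgh j, ← hgh k, hjk])
    rcases Fin.eq_castSucc_or_eq_last j with ⟨i, rfl⟩ | rfl <;>
      rcases Fin.eq_castSucc_or_eq_last k with ⟨i', rfl⟩ | rfl
    · have : i = i' := by simpa [htgt, Fin.snoc_castSucc] using htgteq
      rw [this]
    · exfalso
      have hii0 : i = i0 := by simpa [htgt, Fin.snoc_castSucc, Fin.snoc_last] using htgteq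
      rw [hg] at hjk
      simp only [Fin.snoc_castSucc, Fin.snoc_last] at hjk
      rw [hii0] at hjk
      exact hABne hjk
    · exfalso
      have hii0 : i' = i0 := by
        simpa [htgt, Fin.snoc_castSucc, Fin.snoc_last] using htgteq.symm
      rw [hg] at hjk
      simp only [Fin.snoc_castSucc, Fin.snoc_last] at hjk
      rw [hii0] at hjk
      exact hABne hjk.symm
    · rfl
  -- assemble the witness
  set lam' : {j : ℕ // (j : ℕ∞) < ((N+1 : ℕ))} → ℂ := fun j => g (eN (N+1) j) with hlam'
  have hmapsTo : Set.MapsTo (hmap r) (Metric.ball 0 1) (Metric.ball 0 1) := by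
    intro μ hμ
    exact mem_ball_iff_abs.mpr (hmap_maps hr0 hr1 (mem_ball_iff_abs.mp hμ))
  have hφ' : HoloDisc D (φ ∘ hmap r) :=
    ⟨hφ.1.comp (hmap_diff hr0 hr1) hmapsTo, hφ.2.comp hmapsTo⟩
  refine ⟨∏' j, ‖lam' j‖, ⟨lam', hginj.comp (eN (N+1)).injective,
    fun j => mem_ball_iff_abs.mpr (hgmem _), ⟨φ ∘ hmap r, hφ', ?_, fun j => ?_⟩, rfl⟩, ?_⟩
  · simp [Function.comp, hmap_zero, hφ0]
  · show φ (hmap r (g (eN (N+1) j))) = a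
    rw [hgh, hLa]
  · have hq : ∏' j, ‖lam' j‖ = ∏ i : Fin (N+1), ‖g i‖ := by
      rw [hlam']
      rw [lemSet_prod (D := D) (a := a) (z := z) (fun j => g (eN (N+1) j))]
      exact Finset.prod_congr rfl fun i _ => by rw [Equiv.apply_symm_apply]
    rw [hq, Fin.prod_univ_castSucc]
    simp only [hg, Fin.snoc_castSucc, Fin.snoc_last]
    exact hprod.le

end LemNAux

open LemNAux

/-- For a domain `D ⊆ ℂ^n` and `a, z ∈ D`, the sequence `(l_D^N(a,z))_{N ∈ ℕ}` is
decreasing: `l_D^N(a,z) ≥ l_D^{N+1}(a,z)` for every `N`. -/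
theorem lemN_antitone {n : ℕ} (D : Set (Fin n → ℂ)) (hDo : IsOpen D) (hDc : IsConnected D)
    (a z : Fin n → ℂ) (ha : a ∈ D) (hz : z ∈ D) :
    ∀ N : ℕ, lemN D ((N + 1 : ℕ) : ℕ∞) a z ≤ lemN D ((N : ℕ) : ℕ∞) a z := by
  intro N
  rw [lemN_eq_sInf, lemN_eq_sInf]
  rcases Nat.eq_zero_or_pos N with rfl | hNpos
  · -- N = 0 : the left set consists of numbers < 1, the right one is {1}
    have hone : (1 : ℝ) ∈ lemSet D ((0 : ℕ)) a z := by
      haveI : IsEmpty {j : ℕ // (j : ℕ∞) < ((0 : ℕ) : ℕ∞)} := by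
        constructor
        rintro ⟨j, hj⟩
        simp at hj
      exact ⟨fun j => 0, fun x => (IsEmpty.false x).elim,
        fun j => (IsEmpty.false j).elim,
        ⟨fun _ => z, ⟨differentiableOn_const z, fun μ _ => hz⟩, rfl,
          fun j => (IsEmpty.false j).elim⟩, (tprod_empty).symm⟩
    have hset : lemSet D ((0 : ℕ)) a z = {1} := by
      apply Set.eq_singleton_iff_unique_mem.mpr
      refine ⟨hone, fun p hp => ?_⟩
      obtain ⟨lam, -, -, -, rfl⟩ := hp
      haveI : IsEmpty {j : ℕ // (j : ℕ∞) < ((0 : ℕ) : ℕ∞)} := by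
        constructor
        rintro ⟨j, hj⟩
        simp at hj
      exact tprod_empty
    rw [hset, csInf_singleton]
    by_cases hS : (lemSet D ((0+1 : ℕ)) a z).Nonempty
    · obtain ⟨q, hq⟩ := hS
      calc sInf (lemSet D ((0+1 : ℕ)) a z) ≤ q := csInf_le (lemSet_bddBelow D 1 a z) hq
        _ ≤ 1 := lemSet_le_one hq
    · rw [Set.not_nonempty_iff_eq_empty.mp hS, Real.sInf_empty]
      norm_num
  · by_cases hS : (lemSet D ((N : ℕ)) a z).Nonempty
    · apply le_csInf hS
      intro p hp
      refine le_of_forall_pos_le_add fun ε hε => ?_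
      obtain ⟨q, hq, hqle⟩ := key_step D N hNpos a z hp hε
      exact le_trans (csInf_le (lemSet_bddBelow D (N+1) a z) hq) hqle
    · have hS1 : ¬ (lemSet D ((N+1 : ℕ)) a z).Nonempty := fun h => hS (lemSet_restrict h)
      rw [Set.not_nonempty_iff_eq_empty.mp hS, Set.not_nonempty_iff_eq_empty.mp hS1,
        Real.sInf_empty]
end
end

section
/- Let A be a nonempty at most countable subset of 𝔻 and let z ∈ 𝔻. Then l_𝔻(A,z) = ∏_{a∈A} |Φ_a(z)|, where Φ_a(λ) = (a − λ)/(1 − conj(a)·λ). -/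
open Metric Set Filter

noncomputable section

/-! ### Auxiliary lemmas -/

namespace LempertAux

/-- The Möbius transformation `Φ_α`. -/
def Phi (α w : ℂ) : ℂ := (α - w) / (1 - (starRingEnd ℂ) α * w)

lemma denom_ne (α w : ℂ) (hα : ‖α‖ < 1) (hw : ‖w‖ < 1) :
    (1 : ℂ) - (starRingEnd ℂ) α * w ≠ 0 := by
  intro h
  have h1 : (starRingEnd ℂ) α * w = 1 := by linear_combination -h
  have : ‖(starRingEnd ℂ) α * w‖ = 1 := by rw [h1]; simp
  rw [norm_mul, Complex.norm_conj] at this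
  nlinarith [norm_nonneg α, norm_nonneg w]

lemma phi_mem (α w : ℂ) (hα : ‖α‖ < 1) (hw : ‖w‖ < 1) :
    ‖Phi α w‖ < 1 := by
  have hd := denom_ne α w hα hw
  have hd' : 0 < ‖1 - (starRingEnd ℂ) α * w‖ := by
    simpa [norm_pos_iff] using hd
  rw [Phi, norm_div, div_lt_one hd']
  have hα2 : α.re ^ 2 + α.im ^ 2 < 1 := by
    have : Complex.normSq α < 1 := by
      rw [← Complex.sq_norm]; nlinarith [norm_nonneg α]
    simpa [Complex.normSq_apply, sq] using this
  have hw2 : w.re ^ 2 + w.im ^ 2 < 1 := by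
    have : Complex.normSq w < 1 := by
      rw [← Complex.sq_norm]; nlinarith [norm_nonneg w]
    simpa [Complex.normSq_apply, sq] using this
  have h1 : Complex.normSq (α - w) < Complex.normSq (1 - (starRingEnd ℂ) α * w) := by
    simp only [Complex.normSq_apply, Complex.sub_re, Complex.sub_im, Complex.mul_re,
      Complex.mul_im, Complex.conj_re, Complex.conj_im, Complex.one_re, Complex.one_im]
    nlinarith [mul_pos (sub_pos.2 hα2) (sub_pos.2 hw2)]
  have h2 : ‖α - w‖ ^ 2 < ‖1 - (starRingEnd ℂ) α * w‖ ^ 2 := by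
    rwa [Complex.sq_norm, Complex.sq_norm]
  nlinarith [norm_nonneg (α - w), hd']

lemma phi_invol (α w : ℂ) (hα : ‖α‖ < 1) (hw : ‖w‖ < 1) :
    Phi α (Phi α w) = w := by
  have hd := denom_ne α w hα hw
  have hd2 : (1 : ℂ) - (starRingEnd ℂ) α * α ≠ 0 := by
    intro h
    have h1 : (starRingEnd ℂ) α * α = 1 := by linear_combination -h
    have : ‖(starRingEnd ℂ) α * α‖ = 1 := by rw [h1]; simp
    rw [norm_mul, Complex.norm_conj] at this
    nlinarith [norm_nonneg α]
  have hd2' : (1 : ℂ) - α * (starRingEnd ℂ) α ≠ 0 := by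
    rw [mul_comm]; exact hd2
  have e1 : α - Phi α w = w * (1 - (starRingEnd ℂ) α * α) / (1 - (starRingEnd ℂ) α * w) := by
    rw [Phi, eq_div_iff hd, sub_mul, div_mul_cancel₀ _ hd]; ring
  have e2 : 1 - (starRingEnd ℂ) α * Phi α w
      = (1 - (starRingEnd ℂ) α * α) / (1 - (starRingEnd ℂ) α * w) := by
    rw [Phi, eq_div_iff hd, sub_mul, mul_assoc, div_mul_cancel₀ _ hd]; ring
  rw [Phi, e1, e2, div_div_div_cancel_right₀ hd, mul_div_assoc, div_self hd2, mul_one]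

lemma abs_phi_symm (α w : ℂ) :
    ‖Phi α w‖ = ‖Phi w α‖ := by
  rw [Phi, Phi, norm_div, norm_div]
  congr 1
  · exact norm_sub_rev α w
  · rw [← Complex.norm_conj (1 - (starRingEnd ℂ) w * α)]
    congr 1
    simp [mul_comm]

lemma phi_diffOn (α : ℂ) (hα : ‖α‖ < 1) :
    DifferentiableOn ℂ (Phi α) (ball (0:ℂ) 1) := by
  apply DifferentiableOn.div
  · exact (differentiable_const α).sub differentiable_id |>.differentiableOn
  · exact ((differentiable_const _).mul differentiable_id |>.const_sub 1).differentiableOn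
  · intro w hw
    exact denom_ne α w hα (by simpa [mem_ball, Complex.dist_eq] using hw)

lemma phi_zero (α : ℂ) : Phi α 0 = α := by simp [Phi]

lemma phi_self (α : ℂ) (hα : ‖α‖ < 1) : Phi α α = 0 := by
  simp [Phi]

/-- Schwarz–Pick: if `φ : 𝔻 → 𝔻` is holomorphic, `φ 0 = z` and `φ λ = a`, then
`|Φ_a(z)| ≤ |λ|`. -/
lemma schwarz_pick {φ : ℂ → ℂ} (hφd : DifferentiableOn ℂ φ (ball 0 1))
    (hφm : MapsTo φ (ball (0:ℂ) 1) (ball (0:ℂ) 1)) {z a lam : ℂ}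
    (hz : ‖z‖ < 1) (ha : ‖a‖ < 1) (hlam : ‖lam‖ < 1)
    (h0 : φ 0 = z) (hl : φ lam = a) :
    ‖Phi a z‖ ≤ ‖lam‖ := by
  set g : ℂ → ℂ := fun w => Phi z (φ w) with hg
  have hgd : DifferentiableOn ℂ g (ball 0 1) :=
    (phi_diffOn z hz).comp hφd hφm
  have hgm : MapsTo g (ball (0:ℂ) 1) (ball (0:ℂ) 1) := by
    intro w hw
    have := hφm hw
    rw [mem_ball, Complex.dist_eq, sub_zero] at this ⊢
    exact phi_mem z (φ w) hz this
  have hg0 : g 0 = 0 := by rw [hg]; simp only [h0]; exact phi_self z hz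
  have := Complex.norm_le_norm_of_mapsTo_ball hgd (hgm.mono_right ball_subset_closedBall) hg0 hlam
  rw [hg] at this
  simp only [hl] at this
  rwa [abs_phi_symm a z]

/-- Monotonicity of infinite products of factors in `[0,1]`. -/
lemma hasProd_iInf {ι : Type*} (f : ι → ℝ) (h0 : ∀ i, 0 ≤ f i) (h1 : ∀ i, f i ≤ 1) :
    HasProd f (⨅ s : Finset ι, ∏ i ∈ s, f i) := by
  classical
  have hanti : Antitone (fun s : Finset ι => ∏ i ∈ s, f i) := by
    intro s t hst
    show (∏ i ∈ t, f i) ≤ ∏ i ∈ s, f i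
    rw [← Finset.prod_sdiff hst (f := f)]
    have hle1 : ∏ i ∈ t \ s, f i ≤ 1 :=
      Finset.prod_le_one (fun i _ => h0 i) (fun i _ => h1 i)
    have hnn : 0 ≤ ∏ i ∈ s, f i := Finset.prod_nonneg fun i _ => h0 i
    calc (∏ i ∈ t \ s, f i) * ∏ i ∈ s, f i ≤ 1 * ∏ i ∈ s, f i :=
          mul_le_mul_of_nonneg_right hle1 hnn
      _ = ∏ i ∈ s, f i := one_mul _
  have hbdd : BddBelow (range fun s : Finset ι => ∏ i ∈ s, f i) := by
    refine ⟨0, ?_⟩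
    rintro x ⟨s, rfl⟩
    exact Finset.prod_nonneg fun i _ => h0 i
  exact tendsto_atTop_ciInf hanti hbdd

lemma tprod_mono01 {ι : Type*} (f g : ι → ℝ) (hf0 : ∀ i, 0 ≤ f i)
    (hfg : ∀ i, f i ≤ g i) (hg1 : ∀ i, g i ≤ 1) :
    (∏' i, f i) ≤ ∏' i, g i := by
  have hf1 : ∀ i, f i ≤ 1 := fun i => (hfg i).trans (hg1 i)
  have hg0 : ∀ i, 0 ≤ g i := fun i => (hf0 i).trans (hfg i)
  rw [(hasProd_iInf f hf0 hf1).tprod_eq, (hasProd_iInf g hg0 hg1).tprod_eq]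
  apply ciInf_mono
  · refine ⟨0, ?_⟩
    rintro x ⟨s, rfl⟩
    exact Finset.prod_nonneg fun i _ => hf0 i
  · intro s
    exact Finset.prod_le_prod (fun i _ => hf0 i) (fun i _ => hfg i)

end LempertAux

open LempertAux in
/-- For a nonempty at most countable `A ⊆ 𝔻` and `z ∈ 𝔻`,
`l_𝔻(A,z) = ∏_{a ∈ A} |Φ_a(z)|` where `Φ_a(λ) = (a - λ)/(1 - conj(a)·λ)`. -/
theorem lempert_disc_formula (A : Set ℂ) (hA : A ⊆ Metric.ball (0:ℂ) 1)
    (hAne : A.Nonempty) (hAc : A.Countable) (z : ℂ) (hz : z ∈ Metric.ball (0:ℂ) 1) :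
    lempert (Metric.ball (0:ℂ) 1) A z =
      ∏' a : A, ‖((a : ℂ) - z) / (1 - (starRingEnd ℂ) (a : ℂ) * z)‖ := by
  have hz' : ‖z‖ < 1 := by simpa [mem_ball, Complex.dist_eq] using hz
  have hA' : ∀ a : A, ‖(a : ℂ)‖ < 1 := fun a => by
    simpa [mem_ball, Complex.dist_eq] using hA a.2
  set p₀ : ℝ := ∏' a : A, ‖((a : ℂ) - z) / (1 - (starRingEnd ℂ) (a : ℂ) * z)‖
    with hp₀
  have hphi : ∀ a : A, ‖((a : ℂ) - z) / (1 - (starRingEnd ℂ) (a : ℂ) * z)‖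
      = ‖Phi (a : ℂ) z‖ := fun a => rfl
  -- the set of competitors
  set S := { p : ℝ | ∃ lam : A → ℂ, (∀ a, lam a ∈ Metric.ball (0:ℂ) 1) ∧
    (∃ φ : ℂ → ℂ, HoloDisc (Metric.ball (0:ℂ) 1) φ ∧ φ 0 = z ∧
      ∀ a : A, φ (lam a) = (a : ℂ)) ∧
    p = ∏' a : A, ‖lam a‖ } with hS
  -- `p₀` is a lower bound for `S`
  have hlb : ∀ p ∈ S, p₀ ≤ p := by
    rintro p ⟨lam, hlam, ⟨φ, ⟨hφd, hφm⟩, hφ0, hφl⟩, rfl⟩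
    apply tprod_mono01
    · intro a; exact norm_nonneg _
    · intro a
      have hlama : ‖lam a‖ < 1 := by
        simpa [mem_ball, Complex.dist_eq] using hlam a
      rw [hphi a]
      exact schwarz_pick hφd hφm hz' (hA' a) hlama hφ0 (hφl a)
    · intro a
      have : ‖lam a‖ < 1 := by
        simpa [mem_ball, Complex.dist_eq] using hlam a
      exact this.le
  -- `p₀ ∈ S`
  have hmem : p₀ ∈ S := by
    refine ⟨fun a => Phi z (a : ℂ), ?_, ⟨Phi z, ⟨phi_diffOn z hz', ?_⟩, ?_, ?_⟩, ?_⟩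
    · intro a
      rw [mem_ball, Complex.dist_eq, sub_zero]
      exact phi_mem z _ hz' (hA' a)
    · intro w hw
      rw [mem_ball, Complex.dist_eq, sub_zero] at hw ⊢
      exact phi_mem z w hz' hw
    · exact phi_zero z
    · intro a
      have := phi_invol z (a : ℂ) hz' (hA' a)
      rw [this]
    · rw [hp₀]
      apply tprod_congr
      intro a
      rw [hphi a, abs_phi_symm]
  have hne : S.Nonempty := ⟨p₀, hmem⟩
  have hbdd : BddBelow S := ⟨p₀, hlb⟩
  rw [lempert]
  exact le_antisymm (csInf_le hbdd hmem) (le_csInf hne hlb)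
end
end
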